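/- Let ψ₊, ψ₋ ∈ (0,π), S := ψ₊ + ψ₋, and let c ∈ ℝ satisfy c·sin θ + S > 0 for all θ ∈ [−ψ₊, ψ₋]. Then ∫_{−ψ₊}^{ψ₋} cos θ / (c·sin θ + S) dθ > 0. -/

import Mathlib

open Real Set intervalIntegral

/-- **Positivity of the horizontal extent of the traveling wave profile**:
`∫_{−ψ₊}^{ψ₋} cos θ/(c sin θ + S) dθ > 0` whenever `c sin θ + S > 0` on
`[−ψ₊,ψ₋]`, where `S = ψ₊ + ψ₋`. -/
theorem horizontal_extent_positive
    (ψp ψm c : ℝ) (hψp : ψp ∈ Set.Ioo 0 π) (hψm : ψm ∈ Set.Ioo 0 π)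
    (hpos : ∀ θ ∈ Set.Icc (-ψp) ψm, 0 < c * Real.sin θ + (ψp + ψm)) :
    0 < ∫ θ in (-ψp)..ψm, Real.cos θ / (c * Real.sin θ + (ψp + ψm)) := by
  obtain ⟨hp0, hpπ⟩ := hψp
  obtain ⟨hm0, hmπ⟩ := hψm
  have hle : -ψp ≤ ψm := by linarith
  have huIcc : Set.uIcc (-ψp) ψm = Set.Icc (-ψp) ψm := Set.uIcc_of_le hle
  have hsinp : 0 < Real.sin ψp := Real.sin_pos_of_pos_of_lt_pi hp0 hpπ
  have hsinm : 0 < Real.sin ψm := Real.sin_pos_of_pos_of_lt_pi hm0 hmπ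
  have hcont : ContinuousOn (fun θ => Real.cos θ / (c * Real.sin θ + (ψp + ψm)))
      (Set.uIcc (-ψp) ψm) := by
    rw [huIcc]
    apply ContinuousOn.div
    · exact Real.continuous_cos.continuousOn
    · fun_prop
    · intro θ hθ; exact (hpos θ hθ).ne'
  have hInt : IntervalIntegrable (fun θ => Real.cos θ / (c * Real.sin θ + (ψp + ψm)))
      MeasureTheory.volume (-ψp) ψm := hcont.intervalIntegrable
  rcases eq_or_ne c 0 with hc | hc
  · subst hc
    simp only [zero_mul, zero_add]
    have : (∫ θ in (-ψp)..ψm, Real.cos θ / (ψp + ψm))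
        = (Real.sin ψm - Real.sin (-ψp)) / (ψp + ψm) := by
      rw [intervalIntegral.integral_div, integral_cos]
    rw [this, Real.sin_neg]
    apply div_pos <;> linarith
  · set F : ℝ → ℝ := fun θ => Real.log (c * Real.sin θ + (ψp + ψm)) / c with hF
    have hderiv : ∀ θ ∈ Set.uIcc (-ψp) ψm,
        HasDerivAt F (Real.cos θ / (c * Real.sin θ + (ψp + ψm))) θ := by
      intro θ hθ
      rw [huIcc] at hθ
      have h1 : HasDerivAt (fun θ => c * Real.sin θ + (ψp + ψm)) (c * Real.cos θ) θ :=
        ((Real.hasDerivAt_sin θ).const_mul c).add_const _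
      have h2 := (Real.hasDerivAt_log (hpos θ hθ).ne').comp θ h1
      have h3 := h2.div_const c
      refine h3.congr_deriv ?_
      rw [mul_div_assoc, mul_comm c (Real.cos θ), mul_div_assoc, div_self hc, mul_one,
        inv_mul_eq_div]
    have heq : (∫ θ in (-ψp)..ψm, Real.cos θ / (c * Real.sin θ + (ψp + ψm)))
        = F ψm - F (-ψp) :=
      (intervalIntegral.integral_eq_sub_of_hasDerivAt hderiv hInt).symm ▸ rfl
    rw [intervalIntegral.integral_eq_sub_of_hasDerivAt hderiv hInt]
    have ha : 0 < c * Real.sin ψm + (ψp + ψm) :=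
      hpos ψm ⟨hle, le_refl _⟩
    have hb : 0 < c * Real.sin (-ψp) + (ψp + ψm) :=
      hpos (-ψp) ⟨le_refl _, hle⟩
    rw [hF]
    simp only
    rw [div_sub_div_same]
    rcases hc.lt_or_gt with hcneg | hcpos
    · have hlt : c * Real.sin ψm + (ψp + ψm) < c * Real.sin (-ψp) + (ψp + ψm) := by
        rw [Real.sin_neg]
        nlinarith
      have := Real.log_lt_log ha hlt
      exact div_pos_of_neg_of_neg (by linarith) hcneg
    · have hlt : c * Real.sin (-ψp) + (ψp + ψm) < c * Real.sin ψm + (ψp + ψm) := by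
        rw [Real.sin_neg]
        nlinarith
      have := Real.log_lt_log hb hlt
      exact div_pos (by linarith) hcpos
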